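/- If 𝔘 is a symmetrically pseudo-amenable Banach algebra and J is a closed two-sided ideal of 𝔘 with a bounded approximate identity, then J is symmetrically pseudo-amenable. -/

import Mathlib

open Filter Topology

universe u

/-- A realization of the projective Banach-space tensor square `A ⊗̂ A` of a (non-unital)
Banach algebra `A`, together with the canonical bimodule operations `a•t`, `t•a`, the
"opposite" operations `a∘t`, `t∘a`, the product maps `π`, `π°` and the flip map, each
characterized by its values on elementary tensors.  The norm is the projective tensor norm:
`‖a ⊗ b‖ ≤ ‖a‖‖b‖` and every element is an absolutely convergent sum of elementary tensors
whose total norm is arbitrarily close to its norm; moreover bounded bilinear maps lift. -/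
structure ProjTensorSquare (A : Type u) [NonUnitalNormedRing A] [NormedSpace ℂ A]
    [IsScalarTower ℂ A A] [SMulCommClass ℂ A A] [CompleteSpace A] where
  /-- the underlying Banach space of `A ⊗̂ A` -/
  T : Type u
  [nacg : NormedAddCommGroup T]
  [nsp : NormedSpace ℂ T]
  [cplt : CompleteSpace T]
  /-- the canonical bilinear map `(a, b) ↦ a ⊗ b` -/
  tmul : A →L[ℂ] A →L[ℂ] T
  norm_tmul_le : ∀ a b : A, ‖tmul a b‖ ≤ ‖a‖ * ‖b‖
  /-- the projective norm property -/
  exists_rep : ∀ (t : T) (ε : ℝ), 0 < ε → ∃ u v : ℕ → A,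
      Summable (fun n => ‖u n‖ * ‖v n‖) ∧ HasSum (fun n => tmul (u n) (v n)) t ∧
      ∑' n, ‖u n‖ * ‖v n‖ ≤ ‖t‖ + ε
  /-- the universal property: bounded bilinear maps into a Banach space lift to `T` -/
  lift : ∀ {X : Type u} [NormedAddCommGroup X] [NormedSpace ℂ X] [CompleteSpace X]
      (f : A →L[ℂ] A →L[ℂ] X), ∃ g : T →L[ℂ] X, (∀ a b, g (tmul a b) = f a b) ∧ ‖g‖ ≤ ‖f‖
  /-- the left module action: `a • (b ⊗ c) = (a * b) ⊗ c` -/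
  lmul : A → T →L[ℂ] T
  lmul_tmul : ∀ a b c, lmul a (tmul b c) = tmul (a * b) c
  /-- the right module action: `(b ⊗ c) • a = b ⊗ (c * a)` -/
  rmul : A → T →L[ℂ] T
  rmul_tmul : ∀ a b c, rmul a (tmul b c) = tmul b (c * a)
  /-- the left opposite action: `a ∘ (b ⊗ c) = b ⊗ (a * c)` -/
  lcirc : A → T →L[ℂ] T
  lcirc_tmul : ∀ a b c, lcirc a (tmul b c) = tmul b (a * c)
  /-- the right opposite action: `(b ⊗ c) ∘ a = (b * a) ⊗ c` -/
  rcirc : A → T →L[ℂ] T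
  rcirc_tmul : ∀ a b c, rcirc a (tmul b c) = tmul (b * a) c
  /-- the product map `π : b ⊗ c ↦ b * c` -/
  π : T →L[ℂ] A
  π_tmul : ∀ b c, π (tmul b c) = b * c
  /-- the opposite product map `π° : b ⊗ c ↦ c * b` -/
  πop : T →L[ℂ] A
  πop_tmul : ∀ b c, πop (tmul b c) = c * b
  /-- the flip map `(b ⊗ c)° = c ⊗ b` -/
  flip : T →L[ℂ] T
  flip_tmul : ∀ b c, flip (tmul b c) = tmul c b

attribute [instance] ProjTensorSquare.nacg ProjTensorSquare.nsp ProjTensorSquare.cplt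

namespace ProjTensorSquare

variable {A : Type u} [NonUnitalNormedRing A] [NormedSpace ℂ A]
    [IsScalarTower ℂ A A] [SMulCommClass ℂ A A] [CompleteSpace A]

/-- `t` is an approximate diagonal for `A` consisting of symmetric tensors, along the
filter `l`:  each `t i` is symmetric, `a • tᵢ - tᵢ • a → 0` and `π(tᵢ) a → a` for all `a`. -/
def IsSymmApproxDiagonal (P : ProjTensorSquare A) {ι : Type u} (l : Filter ι)
    (t : ι → P.T) : Prop :=
  (∀ i, P.flip (t i) = t i) ∧
  (∀ a : A, Tendsto (fun i => P.lmul a (t i) - P.rmul a (t i)) l (𝓝 0)) ∧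
  (∀ a : A, Tendsto (fun i => P.π (t i) * a) l (𝓝 a))

/-- A Banach algebra is symmetrically pseudo-amenable if it has a (not necessarily bounded)
approximate diagonal consisting of symmetric tensors. -/
def SymmPseudoAmenable (P : ProjTensorSquare A) : Prop :=
  ∃ (ι : Type u) (l : Filter ι) (t : ι → P.T), l.NeBot ∧ P.IsSymmApproxDiagonal l t

end ProjTensorSquare

section Aux

namespace ProjTensorSquare

variable {A : Type u} [NonUnitalNormedRing A] [NormedSpace ℂ A]
    [IsScalarTower ℂ A A] [SMulCommClass ℂ A A] [CompleteSpace A]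

theorem clm_ext (P : ProjTensorSquare A) {X : Type*} [NormedAddCommGroup X] [NormedSpace ℂ X]
    (g₁ g₂ : P.T →L[ℂ] X) (h : ∀ a b, g₁ (P.tmul a b) = g₂ (P.tmul a b)) : g₁ = g₂ := by
  ext τ
  obtain ⟨u, v, -, hsum, -⟩ := P.exists_rep τ 1 one_pos
  have h1 : HasSum (fun n => g₁ (P.tmul (u n) (v n))) (g₁ τ) := hsum.mapL g₁
  have h2 : HasSum (fun n => g₁ (P.tmul (u n) (v n))) (g₂ τ) := by
    simp only [h]; exact hsum.mapL g₂
  exact h1.unique h2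

variable {B : Type u} [NonUnitalNormedRing B] [NormedSpace ℂ B]
    [IsScalarTower ℂ B B] [SMulCommClass ℂ B B] [CompleteSpace B]

/-- The bilinear map `(a, b) ↦ φ a ⊗ ψ b`. -/
noncomputable def pairAux (Q : ProjTensorSquare B) (φ ψ : A →L[ℂ] B) :
    A →L[ℂ] A →L[ℂ] Q.T :=
  ((ContinuousLinearMap.compL ℂ A B Q.T).flip ψ).comp (Q.tmul.comp φ)

theorem pairAux_apply (Q : ProjTensorSquare B) (φ ψ : A →L[ℂ] B) (a b : A) :
    pairAux Q φ ψ a b = Q.tmul (φ a) (ψ b) := rfl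

theorem pairAux_norm (Q : ProjTensorSquare B) (φ ψ : A →L[ℂ] B) :
    ‖pairAux Q φ ψ‖ ≤ ‖φ‖ * ‖ψ‖ := by
  refine ContinuousLinearMap.opNorm_le_bound _ (by positivity) fun a => ?_
  refine ContinuousLinearMap.opNorm_le_bound _ (by positivity) fun b => ?_
  calc ‖pairAux Q φ ψ a b‖ ≤ ‖φ a‖ * ‖ψ b‖ := Q.norm_tmul_le _ _
    _ ≤ (‖φ‖ * ‖a‖) * (‖ψ‖ * ‖b‖) :=
      mul_le_mul (φ.le_opNorm a) (ψ.le_opNorm b) (norm_nonneg _) (by positivity)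
    _ = ‖φ‖ * ‖ψ‖ * ‖a‖ * ‖b‖ := by ring

/-- The induced map `A ⊗̂ A → B ⊗̂ B`, `a ⊗ b ↦ φ a ⊗ ψ b`. -/
noncomputable def pairMap (P : ProjTensorSquare A) (Q : ProjTensorSquare B)
    (φ ψ : A →L[ℂ] B) : P.T →L[ℂ] Q.T :=
  (P.lift (pairAux Q φ ψ)).choose

theorem pairMap_tmul (P : ProjTensorSquare A) (Q : ProjTensorSquare B)
    (φ ψ : A →L[ℂ] B) (a b : A) :
    pairMap P Q φ ψ (P.tmul a b) = Q.tmul (φ a) (ψ b) :=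
  (P.lift (pairAux Q φ ψ)).choose_spec.1 a b

theorem pairMap_norm_le (P : ProjTensorSquare A) (Q : ProjTensorSquare B)
    (φ ψ : A →L[ℂ] B) : ‖pairMap P Q φ ψ‖ ≤ ‖φ‖ * ‖ψ‖ :=
  le_trans (P.lift (pairAux Q φ ψ)).choose_spec.2 (pairAux_norm Q φ ψ)

theorem flip_flip (P : ProjTensorSquare A) (τ : P.T) : P.flip (P.flip τ) = τ :=
  DFunLike.congr_fun
    (clm_ext P (P.flip.comp P.flip) (ContinuousLinearMap.id ℂ P.T)
      (fun a b => by simp [P.flip_tmul])) τ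

theorem lmul_flip (P : ProjTensorSquare A) (x : A) (τ : P.T) :
    P.lmul x (P.flip τ) = P.flip (P.lcirc x τ) :=
  DFunLike.congr_fun
    (clm_ext P ((P.lmul x).comp P.flip) (P.flip.comp (P.lcirc x))
      (fun a b => by simp [P.flip_tmul, P.lmul_tmul, P.lcirc_tmul])) τ

theorem rmul_flip (P : ProjTensorSquare A) (x : A) (τ : P.T) :
    P.rmul x (P.flip τ) = P.flip (P.rcirc x τ) :=
  DFunLike.congr_fun
    (clm_ext P ((P.rmul x).comp P.flip) (P.flip.comp (P.rcirc x))
      (fun a b => by simp [P.flip_tmul, P.rmul_tmul, P.rcirc_tmul])) τ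

theorem flip_lmul (P : ProjTensorSquare A) (x : A) (τ : P.T) :
    P.flip (P.lmul x τ) = P.lcirc x (P.flip τ) :=
  DFunLike.congr_fun
    (clm_ext P (P.flip.comp (P.lmul x)) ((P.lcirc x).comp P.flip)
      (fun a b => by simp [P.flip_tmul, P.lmul_tmul, P.lcirc_tmul])) τ

theorem flip_rmul (P : ProjTensorSquare A) (x : A) (τ : P.T) :
    P.flip (P.rmul x τ) = P.rcirc x (P.flip τ) :=
  DFunLike.congr_fun
    (clm_ext P (P.flip.comp (P.rmul x)) ((P.rcirc x).comp P.flip)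
      (fun a b => by simp [P.flip_tmul, P.rmul_tmul, P.rcirc_tmul])) τ

theorem pi_flip (P : ProjTensorSquare A) (τ : P.T) : P.π (P.flip τ) = P.πop τ :=
  DFunLike.congr_fun
    (clm_ext P (P.π.comp P.flip) P.πop
      (fun a b => by simp [P.flip_tmul, P.π_tmul, P.πop_tmul])) τ

end ProjTensorSquare

/-- A convenient criterion for convergence along a curried filter via iterated limits. -/
theorem tendsto_curry_of_tendsto {X : Type*} [PseudoMetricSpace X] {ια ιβ : Type*}
    {lα : Filter ια} {lβ : Filter ιβ} {f : ια × ιβ → X} {g : ια → X} {c : X}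
    (hg : Tendsto g lα (𝓝 c)) (hf : ∀ α, Tendsto (fun β => f (α, β)) lβ (𝓝 (g α))) :
    Tendsto f (lα.curry lβ) (𝓝 c) := by
  rw [Metric.tendsto_nhds]
  intro ε hε
  rw [Filter.eventually_curry_iff]
  filter_upwards [Metric.tendsto_nhds.mp hg (ε / 2) (by positivity)] with α hα
  filter_upwards [Metric.tendsto_nhds.mp (hf α) (ε / 2) (by positivity)] with β hβ
  calc dist (f (α, β)) c ≤ dist (f (α, β)) (g α) + dist (g α) c := dist_triangle _ _ _
    _ < ε / 2 + ε / 2 := add_lt_add hβ hα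
    _ = ε := by ring

end Aux

section Aux2

set_option linter.unusedSectionVars false

namespace ProjTensorSquare

variable {A : Type u} [NonUnitalNormedRing A] [NormedSpace ℂ A]
    [IsScalarTower ℂ A A] [SMulCommClass ℂ A A] [CompleteSpace A]
    (J : NonUnitalSubalgebra ℂ A)

noncomputable instance instNormedSpaceIdealJ (J : NonUnitalSubalgebra ℂ A) : NormedSpace ℂ J :=
  SubmoduleClass.toNormedSpace (𝕜 := ℂ) (R := ℂ) J

/-- Left multiplication by an element of an ideal, as a map `A → J`. -/
noncomputable def idealLeft (hJr : ∀ a x : A, x ∈ J → x * a ∈ J) (y : J) : A →L[ℂ] J :=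
  LinearMap.mkContinuous
    { toFun := fun a => ⟨(y : A) * a, hJr a y y.2⟩
      map_add' := fun a b => Subtype.ext (mul_add _ _ _)
      map_smul' := fun c a => Subtype.ext (mul_smul_comm c (y : A) a) }
    ‖y‖ (fun a => by exact norm_mul_le (y : A) a)

/-- Right multiplication by an element of an ideal, as a map `A → J`. -/
noncomputable def idealRight (hJl : ∀ a x : A, x ∈ J → a * x ∈ J) (y : J) : A →L[ℂ] J :=
  LinearMap.mkContinuous
    { toFun := fun a => ⟨a * (y : A), hJl a y y.2⟩
      map_add' := fun a b => Subtype.ext (add_mul _ _ _)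
      map_smul' := fun c a => Subtype.ext (smul_mul_assoc c a (y : A)) }
    ‖y‖ (fun a => by exact (norm_mul_le a (y : A)).trans_eq (mul_comm _ _))

@[simp] theorem idealLeft_apply (hJr : ∀ a x : A, x ∈ J → x * a ∈ J) (y : J) (a : A) :
    (idealLeft J hJr y a : A) = (y : A) * a := by
  unfold idealLeft
  rfl

@[simp] theorem idealRight_apply (hJl : ∀ a x : A, x ∈ J → a * x ∈ J) (y : J) (a : A) :
    (idealRight J hJl y a : A) = a * (y : A) := by
  unfold idealRight
  rfl

/-- The inclusion of a subalgebra as a continuous linear map. -/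
noncomputable def inclCLM : J →L[ℂ] A :=
  ⟨{ toFun := Subtype.val, map_add' := fun _ _ => rfl, map_smul' := fun _ _ => rfl },
    continuous_subtype_val⟩

@[simp] theorem inclCLM_apply (y : J) : inclCLM J y = (y : A) := rfl

theorem idealLeft_norm_le (hJr : ∀ a x : A, x ∈ J → x * a ∈ J) (y : J) :
    ‖idealLeft J hJr y‖ ≤ ‖y‖ :=
  ContinuousLinearMap.opNorm_le_bound _ (norm_nonneg _) fun a => by
    show ‖(idealLeft J hJr y a : A)‖ ≤ ‖y‖ * ‖a‖
    rw [idealLeft_apply]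
    exact norm_mul_le _ _

theorem idealRight_norm_le (hJl : ∀ a x : A, x ∈ J → a * x ∈ J) (y : J) :
    ‖idealRight J hJl y‖ ≤ ‖y‖ :=
  ContinuousLinearMap.opNorm_le_bound _ (norm_nonneg _) fun a => by
    show ‖(idealRight J hJl y a : A)‖ ≤ ‖y‖ * ‖a‖
    rw [idealRight_apply, mul_comm ‖y‖]
    exact norm_mul_le _ _

variable (hJl : ∀ a x : A, x ∈ J → a * x ∈ J) (hJr : ∀ a x : A, x ∈ J → x * a ∈ J)
variable [CompleteSpace J] (P : ProjTensorSquare A) (PJ : ProjTensorSquare J)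

/-- The map `a ⊗ b ↦ (wa) ⊗ (bw) : A ⊗̂ A → J ⊗̂ J`. -/
noncomputable def theta (w : J) : P.T →L[ℂ] PJ.T :=
  pairMap P PJ (idealLeft J hJr w) (idealRight J hJl w)

theorem theta_tmul (w : J) (a b : A) :
    theta J hJl hJr P PJ w (P.tmul a b) =
      PJ.tmul (idealLeft J hJr w a) (idealRight J hJl w b) :=
  pairMap_tmul _ _ _ _ _ _

theorem theta_norm_le (w : J) : ‖theta J hJl hJr P PJ w‖ ≤ ‖w‖ * ‖w‖ :=
  (pairMap_norm_le _ _ _ _).trans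
    (mul_le_mul (idealLeft_norm_le J hJr w) (idealRight_norm_le J hJl w)
      (norm_nonneg _) (norm_nonneg _))

theorem lmul_theta (w x : J) :
    (PJ.lmul x).comp (theta J hJl hJr P PJ w) =
      (theta J hJl hJr P PJ w).comp (P.lmul (x : A)) +
        pairMap P PJ (idealLeft J hJr (x * w - w * x)) (idealRight J hJl w) := by
  refine clm_ext P _ _ fun a b => ?_
  have harg : x * idealLeft J hJr w a =
      idealLeft J hJr w ((x : A) * a) + idealLeft J hJr (x * w - w * x) a := by
    apply Subtype.ext
    push_cast [idealLeft_apply]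
    rw [sub_mul]
    simp only [mul_assoc]
    abel
  simp only [ContinuousLinearMap.coe_comp', Function.comp_apply,
    ContinuousLinearMap.add_apply, theta_tmul, pairMap_tmul, PJ.lmul_tmul, P.lmul_tmul]
  rw [harg, map_add, ContinuousLinearMap.add_apply]

theorem rmul_theta (w x : J) :
    (PJ.rmul x).comp (theta J hJl hJr P PJ w) =
      (theta J hJl hJr P PJ w).comp (P.rmul (x : A)) +
        pairMap P PJ (idealLeft J hJr w) (idealRight J hJl (w * x - x * w)) := by
  refine clm_ext P _ _ fun a b => ?_
  have harg : idealRight J hJl w b * x =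
      idealRight J hJl w (b * (x : A)) + idealRight J hJl (w * x - x * w) b := by
    apply Subtype.ext
    push_cast [idealRight_apply]
    rw [mul_sub]
    simp only [mul_assoc]
    abel
  simp only [ContinuousLinearMap.coe_comp', Function.comp_apply,
    ContinuousLinearMap.add_apply, theta_tmul, pairMap_tmul, PJ.rmul_tmul, P.rmul_tmul]
  rw [harg, map_add]

theorem lcirc_theta (w x : J) :
    (PJ.lcirc x).comp (theta J hJl hJr P PJ w) =
      (theta J hJl hJr P PJ w).comp (P.lcirc (x : A)) := by
  refine clm_ext P _ _ fun a b => ?_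
  have harg : x * idealRight J hJl w b = idealRight J hJl w ((x : A) * b) := by
    apply Subtype.ext
    push_cast [idealRight_apply]
    rw [mul_assoc]
  simp only [ContinuousLinearMap.coe_comp', Function.comp_apply, theta_tmul,
    PJ.lcirc_tmul, P.lcirc_tmul, harg]

theorem rcirc_theta (w x : J) :
    (PJ.rcirc x).comp (theta J hJl hJr P PJ w) =
      (theta J hJl hJr P PJ w).comp (P.rcirc (x : A)) := by
  refine clm_ext P _ _ fun a b => ?_
  have harg : idealLeft J hJr w a * x = idealLeft J hJr w (a * (x : A)) := by
    apply Subtype.ext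
    push_cast [idealLeft_apply]
    rw [mul_assoc]
  simp only [ContinuousLinearMap.coe_comp', Function.comp_apply, theta_tmul,
    PJ.rcirc_tmul, P.rcirc_tmul, harg]

end ProjTensorSquare

end Aux2

open ProjTensorSquare

set_option maxHeartbeats 2000000

/-- If `𝔘` is a symmetrically pseudo-amenable Banach algebra and `J` is a closed
two-sided ideal of `𝔘` with a bounded approximate identity, then `J` is symmetrically
pseudo-amenable. -/
theorem symmPseudoAmenable_ideal_of_bai {A : Type u} [NonUnitalNormedRing A] [NormedSpace ℂ A]
    [IsScalarTower ℂ A A] [SMulCommClass ℂ A A] [CompleteSpace A]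
    (P : ProjTensorSquare A) (h : P.SymmPseudoAmenable)
    (J : NonUnitalSubalgebra ℂ A)
    (hJl : ∀ a x : A, x ∈ J → a * x ∈ J) (hJr : ∀ a x : A, x ∈ J → x * a ∈ J)
    (hJc : IsClosed (J : Set A))
    {ι : Type u} (l : Filter ι) [l.NeBot] (e : ι → J)
    (happrox : ∀ x : J, Tendsto (fun i => e i * x) l (𝓝 x) ∧
      Tendsto (fun i => x * e i) l (𝓝 x))
    (hbdd : ∃ C : ℝ, ∀ i, ‖e i‖ ≤ C)
    (PJ : @ProjTensorSquare J _ (SubmoduleClass.toNormedSpace (𝕜 := ℂ) (R := ℂ) J) _ _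
      hJc.completeSpace_coe) :
    @ProjTensorSquare.SymmPseudoAmenable J _ (SubmoduleClass.toNormedSpace (𝕜 := ℂ) (R := ℂ) J)
      _ _ hJc.completeSpace_coe PJ := by
  revert PJ
  change ∀ PJ : @ProjTensorSquare J _ (instNormedSpaceIdealJ J) _ _ hJc.completeSpace_coe,
    @ProjTensorSquare.SymmPseudoAmenable J _ (instNormedSpaceIdealJ J) _ _ hJc.completeSpace_coe PJ
  intro PJ
  classical
  haveI : CompleteSpace (↥J) := hJc.completeSpace_coe
  obtain ⟨ιA, lA, t, hneA, hsymm, hcom, hpi⟩ := h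
  haveI := hneA
  obtain ⟨C, hC⟩ := hbdd
  have hC0 : 0 ≤ C := le_trans (norm_nonneg _) (hC (Filter.nonempty_of_neBot l).some)
  -- choose absolutely convergent representations of the approximate diagonal
  choose u v hsummable hhassum _hbnd using fun α => P.exists_rep (t α) 1 one_pos
  -- the candidate symmetric approximate diagonal for J
  set s : ιA × ι → PJ.T := fun i =>
    (2⁻¹ : ℂ) • (theta J hJl hJr P PJ (e i.2) (t i.1) +
      PJ.flip (theta J hJl hJr P PJ (e i.2) (t i.1))) with hs
  -- bounded approximate identity convergence facts, all phrased inside `A`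
  have L_bai : ∀ {y : A}, y ∈ J → ∀ {f : ι → A}, Tendsto f l (𝓝 y) →
      Tendsto (fun β => (e β : A) * f β) l (𝓝 y) := by
    intro y hy f hf
    have h0 : Tendsto (fun β => (e β : A) * y - y) l (𝓝 0) := by
      have h' : Tendsto (fun β => ((e β * ⟨y, hy⟩ : J) : A)) l (𝓝 y) :=
        (continuous_subtype_val.tendsto _).comp (happrox ⟨y, hy⟩).1
      have := h'.sub (tendsto_const_nhds (x := y))
      simpa using this
    have h1 : Tendsto (fun β => ‖f β - y‖) l (𝓝 0) := by
      have := (hf.sub (tendsto_const_nhds (x := y))).norm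
      simpa using this
    have hb : Tendsto (fun β => C * ‖f β - y‖ + ‖(e β : A) * y - y‖) l (𝓝 0) := by
      have := (h1.const_mul C).add h0.norm
      simpa using this
    have key : Tendsto (fun β => (e β : A) * f β - y) l (𝓝 0) := by
      refine squeeze_zero_norm (fun β => ?_) hb
      calc ‖(e β : A) * f β - y‖
          = ‖(e β : A) * (f β - y) + ((e β : A) * y - y)‖ := by rw [mul_sub]; congr 1; abel
        _ ≤ ‖(e β : A) * (f β - y)‖ + ‖(e β : A) * y - y‖ := norm_add_le _ _
        _ ≤ C * ‖f β - y‖ + ‖(e β : A) * y - y‖ := by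
            have := (norm_mul_le (e β : A) (f β - y)).trans
              (mul_le_mul_of_nonneg_right (hC β) (norm_nonneg _))
            linarith
    have := key.add (tendsto_const_nhds (x := y))
    simpa using this
  have R_bai : ∀ {y : A}, y ∈ J → ∀ {f : ι → A}, Tendsto f l (𝓝 y) →
      Tendsto (fun β => f β * (e β : A)) l (𝓝 y) := by
    intro y hy f hf
    have h0 : Tendsto (fun β => y * (e β : A) - y) l (𝓝 0) := by
      have h' : Tendsto (fun β => (((⟨y, hy⟩ : J) * e β : J) : A)) l (𝓝 y) :=
        (continuous_subtype_val.tendsto _).comp (happrox ⟨y, hy⟩).2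
      have := h'.sub (tendsto_const_nhds (x := y))
      simpa using this
    have h1 : Tendsto (fun β => ‖f β - y‖) l (𝓝 0) := by
      have := (hf.sub (tendsto_const_nhds (x := y))).norm
      simpa using this
    have hb : Tendsto (fun β => ‖f β - y‖ * C + ‖y * (e β : A) - y‖) l (𝓝 0) := by
      have := (h1.mul_const C).add h0.norm
      simpa using this
    have key : Tendsto (fun β => f β * (e β : A) - y) l (𝓝 0) := by
      refine squeeze_zero_norm (fun β => ?_) hb
      calc ‖f β * (e β : A) - y‖
          = ‖(f β - y) * (e β : A) + (y * (e β : A) - y)‖ := by rw [sub_mul]; congr 1; abel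
        _ ≤ ‖(f β - y) * (e β : A)‖ + ‖y * (e β : A) - y‖ := norm_add_le _ _
        _ ≤ ‖f β - y‖ * C + ‖y * (e β : A) - y‖ := by
            have := (norm_mul_le (f β - y) (e β : A)).trans
              (mul_le_mul_of_nonneg_left (hC β) (norm_nonneg _))
            linarith
    have := key.add (tendsto_const_nhds (x := y))
    simpa using this
  refine ⟨ιA × ι, lA.curry l, s, ?_, ?_, ?_, ?_⟩
  · -- NeBot
    refine Filter.forall_mem_nonempty_iff_neBot.mp fun sset hss => ?_
    rw [Filter.mem_curry_iff] at hss
    obtain ⟨α, hα⟩ := hss.exists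
    obtain ⟨β, hβ⟩ := hα.exists
    exact ⟨(α, β), hβ⟩
  · -- symmetry
    intro i
    simp only [hs]
    rw [map_smul, map_add, ProjTensorSquare.flip_flip, add_comm]
  · -- approximate commutator property
    intro x
    -- the commutator of `t α` with `x` in `A`
    set c : ιA → P.T := fun α => P.lmul (x : A) (t α) - P.rmul (x : A) (t α) with hcdef
    have hc : Tendsto c lA (𝓝 0) := hcom (x : A)
    -- the commutator of `e β` with `x` tends to zero in norm
    have hdnorm : Tendsto (fun β => ‖(x * e β - e β * x : J)‖) l (𝓝 0) := by
      have h1 : Tendsto (fun β => ((x : A) * (e β : A))) l (𝓝 (x : A)) :=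
        R_bai x.2 tendsto_const_nhds
      have h2 : Tendsto (fun β => ((e β : A) * (x : A))) l (𝓝 (x : A)) :=
        L_bai x.2 tendsto_const_nhds
      have := (h1.sub h2).norm
      rw [sub_self, norm_zero] at this
      exact this
    -- exact algebraic identity for the commutator of `s` with `x`
    have hcomEq : ∀ α β, PJ.lmul x (s (α, β)) - PJ.rmul x (s (α, β)) =
        (2⁻¹ : ℂ) • (theta J hJl hJr P PJ (e β) (c α) +
          (pairMap P PJ (idealLeft J hJr (x * e β - e β * x)) (idealRight J hJl (e β)) (t α) -
            pairMap P PJ (idealLeft J hJr (e β)) (idealRight J hJl (e β * x - x * e β)) (t α)) +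
          PJ.flip (theta J hJl hJr P PJ (e β) (P.flip (c α)))) := by
      intro α β
      have e1 : PJ.lmul x (theta J hJl hJr P PJ (e β) (t α)) =
          theta J hJl hJr P PJ (e β) (P.lmul (x : A) (t α)) +
            pairMap P PJ (idealLeft J hJr (x * e β - e β * x)) (idealRight J hJl (e β)) (t α) := by
        have := DFunLike.congr_fun (lmul_theta J hJl hJr P PJ (e β) x) (t α)
        simpa only [ContinuousLinearMap.coe_comp', Function.comp_apply,
          ContinuousLinearMap.add_apply] using this
      have e2 : PJ.rmul x (theta J hJl hJr P PJ (e β) (t α)) =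
          theta J hJl hJr P PJ (e β) (P.rmul (x : A) (t α)) +
            pairMap P PJ (idealLeft J hJr (e β)) (idealRight J hJl (e β * x - x * e β)) (t α) := by
        have := DFunLike.congr_fun (rmul_theta J hJl hJr P PJ (e β) x) (t α)
        simpa only [ContinuousLinearMap.coe_comp', Function.comp_apply,
          ContinuousLinearMap.add_apply] using this
      have e3 : PJ.lcirc x (theta J hJl hJr P PJ (e β) (t α)) =
          theta J hJl hJr P PJ (e β) (P.lcirc (x : A) (t α)) := by
        have := DFunLike.congr_fun (lcirc_theta J hJl hJr P PJ (e β) x) (t α)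
        simpa only [ContinuousLinearMap.coe_comp', Function.comp_apply] using this
      have e4 : PJ.rcirc x (theta J hJl hJr P PJ (e β) (t α)) =
          theta J hJl hJr P PJ (e β) (P.rcirc (x : A) (t α)) := by
        have := DFunLike.congr_fun (rcirc_theta J hJl hJr P PJ (e β) x) (t α)
        simpa only [ContinuousLinearMap.coe_comp', Function.comp_apply] using this
      have e7 : P.lcirc (x : A) (t α) = P.flip (P.lmul (x : A) (t α)) := by
        rw [flip_lmul, hsymm α]
      have e8 : P.rcirc (x : A) (t α) = P.flip (P.rmul (x : A) (t α)) := by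
        rw [flip_rmul, hsymm α]
      simp only [hs]
      rw [map_smul, map_smul, ← smul_sub]
      congr 1
      rw [map_add, map_add, e1, e2, lmul_flip, rmul_flip, e3, e4, e7, e8]
      simp only [hcdef, map_sub]
      abel
    -- norm estimates and the ε-argument
    rw [NormedAddCommGroup.tendsto_nhds_zero]
    intro ε hε
    rw [Filter.eventually_curry_iff]
    set K : ℝ := ‖PJ.flip‖ * ‖P.flip‖ with hKdef
    have hK0 : 0 ≤ K := mul_nonneg (norm_nonneg _) (norm_nonneg _)
    set B1 : ℝ := C * C * (1 + K) with hB1def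
    have hB10 : 0 ≤ B1 := by positivity
    have hδ1pos : 0 < ε / (2 * (B1 + 1)) := by positivity
    have hcε : ∀ᶠ α in lA, ‖c α‖ < ε / (2 * (B1 + 1)) := by
      have := NormedAddCommGroup.tendsto_nhds_zero.mp hc (ε / (2 * (B1 + 1))) hδ1pos
      exact this
    filter_upwards [hcε] with α hα
    have hδ2pos : 0 < ε / (2 * (2 * C * ‖t α‖ + 1)) := by positivity
    have hdsmall : ∀ᶠ β in l, ‖(x * e β - e β * x : J)‖ < ε / (2 * (2 * C * ‖t α‖ + 1)) :=
      hdnorm.eventually_lt_const hδ2pos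
    filter_upwards [hdsmall] with β hβ
    rw [hcomEq α β]
    have hΘn : ‖theta J hJl hJr P PJ (e β)‖ ≤ C * C :=
      (theta_norm_le J hJl hJr P PJ (e β)).trans
        (mul_le_mul (hC β) (hC β) (norm_nonneg _) hC0)
    have hb1 : ‖theta J hJl hJr P PJ (e β) (c α)‖ ≤ C * C * ‖c α‖ :=
      ((theta J hJl hJr P PJ (e β)).le_opNorm (c α)).trans
        (mul_le_mul_of_nonneg_right hΘn (norm_nonneg _))
    have hb2 : ‖pairMap P PJ (idealLeft J hJr (x * e β - e β * x))
        (idealRight J hJl (e β)) (t α)‖ ≤ ‖(x * e β - e β * x : J)‖ * C * ‖t α‖ := by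
      refine (ContinuousLinearMap.le_opNorm _ _).trans ?_
      have hnm : ‖pairMap P PJ (idealLeft J hJr (x * e β - e β * x)) (idealRight J hJl (e β))‖ ≤
          ‖(x * e β - e β * x : J)‖ * C :=
        (pairMap_norm_le _ _ _ _).trans
          (mul_le_mul ((idealLeft_norm_le _ _ _)) ((idealRight_norm_le _ _ _).trans (hC β))
            (norm_nonneg _) (norm_nonneg _))
      exact mul_le_mul_of_nonneg_right hnm (norm_nonneg _)
    have hb3 : ‖pairMap P PJ (idealLeft J hJr (e β))
        (idealRight J hJl (e β * x - x * e β)) (t α)‖ ≤ C * ‖(x * e β - e β * x : J)‖ * ‖t α‖ := by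
      refine (ContinuousLinearMap.le_opNorm _ _).trans ?_
      have hrev : ‖(e β * x - x * e β : J)‖ = ‖(x * e β - e β * x : J)‖ := by
        rw [show (e β * x - x * e β : J) = -(x * e β - e β * x) from (neg_sub _ _).symm, norm_neg]
      have hnm : ‖pairMap P PJ (idealLeft J hJr (e β)) (idealRight J hJl (e β * x - x * e β))‖ ≤
          C * ‖(x * e β - e β * x : J)‖ :=
        (pairMap_norm_le _ _ _ _).trans
          (mul_le_mul ((idealLeft_norm_le _ _ _).trans (hC β))
            ((idealRight_norm_le _ _ _).trans_eq hrev) (norm_nonneg _) hC0)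
      exact mul_le_mul_of_nonneg_right hnm (norm_nonneg _)
    have hb4 : ‖PJ.flip (theta J hJl hJr P PJ (e β) (P.flip (c α)))‖ ≤
        ‖PJ.flip‖ * (C * C * (‖P.flip‖ * ‖c α‖)) := by
      refine (PJ.flip.le_opNorm _).trans ?_
      refine mul_le_mul_of_nonneg_left ?_ (norm_nonneg _)
      refine ((theta J hJl hJr P PJ (e β)).le_opNorm _).trans ?_
      exact mul_le_mul hΘn (P.flip.le_opNorm _) (norm_nonneg _) (by positivity)
    have hnd0 : 0 ≤ ‖(x * e β - e β * x : J)‖ := norm_nonneg _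
    have htα0 : 0 ≤ ‖t α‖ := norm_nonneg _
    have hhalf : ‖(2⁻¹ : ℂ)‖ ≤ 1 := by norm_num
    have hq1 : (B1 + 1) * (ε / (2 * (B1 + 1))) = ε / 2 := by
      field_simp
    have hq2 : (2 * C * ‖t α‖ + 1) * (ε / (2 * (2 * C * ‖t α‖ + 1))) = ε / 2 := by
      have hne : (2 * C * ‖t α‖ + 1) ≠ 0 := by positivity
      field_simp
    have l1 : B1 * ‖c α‖ ≤ B1 * (ε / (2 * (B1 + 1))) := mul_le_mul_of_nonneg_left hα.le hB10
    have l2 : B1 * (ε / (2 * (B1 + 1))) < ε / 2 := by nlinarith [hδ1pos]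
    have l3 : 2 * C * ‖t α‖ * ‖(x * e β - e β * x : J)‖ ≤
        2 * C * ‖t α‖ * (ε / (2 * (2 * C * ‖t α‖ + 1))) :=
      mul_le_mul_of_nonneg_left hβ.le (by positivity)
    have l4 : 2 * C * ‖t α‖ * (ε / (2 * (2 * C * ‖t α‖ + 1))) < ε / 2 := by nlinarith [hδ2pos]
    calc ‖(2⁻¹ : ℂ) • (theta J hJl hJr P PJ (e β) (c α) +
          (pairMap P PJ (idealLeft J hJr (x * e β - e β * x)) (idealRight J hJl (e β)) (t α) -
            pairMap P PJ (idealLeft J hJr (e β)) (idealRight J hJl (e β * x - x * e β)) (t α)) +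
          PJ.flip (theta J hJl hJr P PJ (e β) (P.flip (c α))))‖
        ≤ 1 * ‖theta J hJl hJr P PJ (e β) (c α) +
          (pairMap P PJ (idealLeft J hJr (x * e β - e β * x)) (idealRight J hJl (e β)) (t α) -
            pairMap P PJ (idealLeft J hJr (e β)) (idealRight J hJl (e β * x - x * e β)) (t α)) +
          PJ.flip (theta J hJl hJr P PJ (e β) (P.flip (c α)))‖ := by
          rw [norm_smul]
          exact mul_le_mul_of_nonneg_right hhalf (norm_nonneg _)
      _ = ‖theta J hJl hJr P PJ (e β) (c α) +
          (pairMap P PJ (idealLeft J hJr (x * e β - e β * x)) (idealRight J hJl (e β)) (t α) -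
            pairMap P PJ (idealLeft J hJr (e β)) (idealRight J hJl (e β * x - x * e β)) (t α)) +
          PJ.flip (theta J hJl hJr P PJ (e β) (P.flip (c α)))‖ := one_mul _
      _ ≤ (‖theta J hJl hJr P PJ (e β) (c α)‖ +
            (‖pairMap P PJ (idealLeft J hJr (x * e β - e β * x))
                (idealRight J hJl (e β)) (t α)‖ +
              ‖pairMap P PJ (idealLeft J hJr (e β))
                (idealRight J hJl (e β * x - x * e β)) (t α)‖)) +
          ‖PJ.flip (theta J hJl hJr P PJ (e β) (P.flip (c α)))‖ := by
          refine (norm_add_le _ _).trans ?_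
          exact add_le_add ((norm_add_le _ _).trans (add_le_add le_rfl (norm_sub_le _ _))) le_rfl
      _ ≤ (C * C * ‖c α‖ + (‖(x * e β - e β * x : J)‖ * C * ‖t α‖ +
            C * ‖(x * e β - e β * x : J)‖ * ‖t α‖)) +
          ‖PJ.flip‖ * (C * C * (‖P.flip‖ * ‖c α‖)) :=
          add_le_add (add_le_add hb1 (add_le_add hb2 hb3)) hb4
      _ = B1 * ‖c α‖ + 2 * C * ‖t α‖ * ‖(x * e β - e β * x : J)‖ := by
          rw [hB1def, hKdef]; ring
      _ < ε := by linarith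

  · -- approximate identity property of π
    intro x
    have hΘsum : ∀ α β, HasSum (fun n => PJ.tmul (idealLeft J hJr (e β) (u α n))
        (idealRight J hJl (e β) (v α n))) (theta J hJl hJr P PJ (e β) (t α)) := by
      intro α β
      have := (hhassum α).mapL (theta J hJl hJr P PJ (e β))
      simpa only [theta_tmul] using this
    have hsum1 : ∀ α β, HasSum
        (fun n => (((e β : A) * u α n) * (v α n * (e β : A))) * (x : A))
        ((PJ.π (theta J hJl hJr P PJ (e β) (t α)) : A) * (x : A)) := by
      intro α β
      have := (hΘsum α β).mapL
        ((((ContinuousLinearMap.mul ℂ A).flip (x : A)).comp ((inclCLM J).comp PJ.π)))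
      simpa only [ContinuousLinearMap.coe_comp', Function.comp_apply,
        ContinuousLinearMap.flip_apply, ContinuousLinearMap.mul_apply',
        inclCLM_apply, PJ.π_tmul, MulMemClass.coe_mul,
        idealLeft_apply, idealRight_apply] using this
    have hsum2 : ∀ α β, HasSum
        (fun n => ((v α n * (e β : A)) * ((e β : A) * u α n)) * (x : A))
        ((PJ.πop (theta J hJl hJr P PJ (e β) (t α)) : A) * (x : A)) := by
      intro α β
      have := (hΘsum α β).mapL
        ((((ContinuousLinearMap.mul ℂ A).flip (x : A)).comp ((inclCLM J).comp PJ.πop)))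
      simpa only [ContinuousLinearMap.coe_comp', Function.comp_apply,
        ContinuousLinearMap.flip_apply, ContinuousLinearMap.mul_apply',
        inclCLM_apply, PJ.πop_tmul, MulMemClass.coe_mul,
        idealLeft_apply, idealRight_apply] using this
    have hval : ∀ α β, (↑(PJ.π (s (α, β)) * x) : A) =
        (2⁻¹ : ℂ) • ((↑(PJ.π (theta J hJl hJr P PJ (e β) (t α))) : A) * (x : A) +
          (↑(PJ.πop (theta J hJl hJr P PJ (e β) (t α))) : A) * (x : A)) := by
      intro α β
      have h1 : PJ.π (s (α, β)) = (2⁻¹ : ℂ) •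
          (PJ.π (theta J hJl hJr P PJ (e β) (t α)) +
            PJ.πop (theta J hJl hJr P PJ (e β) (t α))) := by
        simp only [hs]
        rw [map_smul, map_add, pi_flip]
      rw [h1, smul_mul_assoc, add_mul]
      rfl
    have hinner : ∀ α, Tendsto (fun β => (↑(PJ.π (s (α, β)) * x) : A)) l
        (𝓝 (P.π (t α) * (x : A))) := by
      intro α
      have hbound : Summable (fun n => ‖u α n‖ * ‖v α n‖ * (C * C * ‖(x : A)‖)) :=
        (hsummable α).mul_right _
      have hdom1 : ∀ᶠ β in l, ∀ n, ‖(((e β : A) * u α n) * (v α n * (e β : A))) * (x : A)‖ ≤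
          ‖u α n‖ * ‖v α n‖ * (C * C * ‖(x : A)‖) := by
        refine Filter.Eventually.of_forall fun β n => ?_
        have h1 : ‖(e β : A) * u α n‖ ≤ C * ‖u α n‖ := (norm_mul_le _ _).trans
          (mul_le_mul_of_nonneg_right (hC β) (norm_nonneg _))
        have h2 : ‖v α n * (e β : A)‖ ≤ ‖v α n‖ * C := (norm_mul_le _ _).trans
          (mul_le_mul_of_nonneg_left (hC β) (norm_nonneg _))
        calc ‖(((e β : A) * u α n) * (v α n * (e β : A))) * (x : A)‖
            ≤ ‖((e β : A) * u α n) * (v α n * (e β : A))‖ * ‖(x : A)‖ := norm_mul_le _ _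
          _ ≤ (‖(e β : A) * u α n‖ * ‖v α n * (e β : A)‖) * ‖(x : A)‖ :=
              mul_le_mul_of_nonneg_right (norm_mul_le _ _) (norm_nonneg _)
          _ ≤ ((C * ‖u α n‖) * (‖v α n‖ * C)) * ‖(x : A)‖ :=
              mul_le_mul_of_nonneg_right
                (mul_le_mul h1 h2 (norm_nonneg _) (by positivity)) (norm_nonneg _)
          _ = ‖u α n‖ * ‖v α n‖ * (C * C * ‖(x : A)‖) := by ring
      have hdom2 : ∀ᶠ β in l, ∀ n, ‖((v α n * (e β : A)) * ((e β : A) * u α n)) * (x : A)‖ ≤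
          ‖u α n‖ * ‖v α n‖ * (C * C * ‖(x : A)‖) := by
        refine Filter.Eventually.of_forall fun β n => ?_
        have h1 : ‖(e β : A) * u α n‖ ≤ C * ‖u α n‖ := (norm_mul_le _ _).trans
          (mul_le_mul_of_nonneg_right (hC β) (norm_nonneg _))
        have h2 : ‖v α n * (e β : A)‖ ≤ ‖v α n‖ * C := (norm_mul_le _ _).trans
          (mul_le_mul_of_nonneg_left (hC β) (norm_nonneg _))
        calc ‖((v α n * (e β : A)) * ((e β : A) * u α n)) * (x : A)‖
            ≤ ‖(v α n * (e β : A)) * ((e β : A) * u α n)‖ * ‖(x : A)‖ := norm_mul_le _ _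
          _ ≤ (‖v α n * (e β : A)‖ * ‖(e β : A) * u α n‖) * ‖(x : A)‖ :=
              mul_le_mul_of_nonneg_right (norm_mul_le _ _) (norm_nonneg _)
          _ ≤ ((‖v α n‖ * C) * (C * ‖u α n‖)) * ‖(x : A)‖ :=
              mul_le_mul_of_nonneg_right
                (mul_le_mul h2 h1 (norm_nonneg _) (by positivity)) (norm_nonneg _)
          _ = ‖u α n‖ * ‖v α n‖ * (C * C * ‖(x : A)‖) := by ring
      have hlim1 : ∀ n, Tendsto
          (fun β => (((e β : A) * u α n) * (v α n * (e β : A))) * (x : A)) l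
          (𝓝 (u α n * v α n * (x : A))) := by
        intro n
        have t0 : Tendsto (fun β => (e β : A) * (x : A)) l (𝓝 (x : A)) :=
          L_bai x.2 tendsto_const_nhds
        have t1 := t0.const_mul (v α n)
        have t2 := t1.const_mul (u α n)
        have hmem : u α n * (v α n * (x : A)) ∈ J := hJl _ _ (hJl _ _ x.2)
        have t3 := L_bai hmem t2
        simpa only [mul_assoc] using t3
      have hlim2 : ∀ n, Tendsto
          (fun β => ((v α n * (e β : A)) * ((e β : A) * u α n)) * (x : A)) l
          (𝓝 (v α n * u α n * (x : A))) := by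
        intro n
        have hmemu : u α n * (x : A) ∈ J := hJl _ _ x.2
        have t0 : Tendsto (fun β => (e β : A) * (u α n * (x : A))) l (𝓝 (u α n * (x : A))) :=
          L_bai hmemu tendsto_const_nhds
        have t1 := L_bai hmemu t0
        have t2 := t1.const_mul (v α n)
        simpa only [mul_assoc] using t2
      have hg1 : HasSum (fun n => u α n * v α n * (x : A)) (P.π (t α) * (x : A)) := by
        have := (hhassum α).mapL (((ContinuousLinearMap.mul ℂ A).flip (x : A)).comp P.π)
        simpa only [ContinuousLinearMap.coe_comp', Function.comp_apply,
          ContinuousLinearMap.flip_apply, ContinuousLinearMap.mul_apply', P.π_tmul] using this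
      have hg2 : HasSum (fun n => v α n * u α n * (x : A)) (P.π (t α) * (x : A)) := by
        have := (hhassum α).mapL (((ContinuousLinearMap.mul ℂ A).flip (x : A)).comp P.πop)
        have hop : P.πop (t α) = P.π (t α) := by rw [← pi_flip, hsymm α]
        simpa only [ContinuousLinearMap.coe_comp', Function.comp_apply,
          ContinuousLinearMap.flip_apply, ContinuousLinearMap.mul_apply', P.πop_tmul,
          hop] using this
      have hS1 : Tendsto (fun β => (↑(PJ.π (theta J hJl hJr P PJ (e β) (t α))) : A) * (x : A))
          l (𝓝 (P.π (t α) * (x : A))) := by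
        have := tendsto_tsum_of_dominated_convergence hbound hlim1 hdom1
        rw [hg1.tsum_eq] at this
        exact this.congr fun β => (hsum1 α β).tsum_eq
      have hS2 : Tendsto (fun β => (↑(PJ.πop (theta J hJl hJr P PJ (e β) (t α))) : A) * (x : A))
          l (𝓝 (P.π (t α) * (x : A))) := by
        have := tendsto_tsum_of_dominated_convergence hbound hlim2 hdom2
        rw [hg2.tsum_eq] at this
        exact this.congr fun β => (hsum2 α β).tsum_eq
      have hfin := (hS1.add hS2).const_smul (2⁻¹ : ℂ)
      have hyy : (2⁻¹ : ℂ) • (P.π (t α) * (x : A) + P.π (t α) * (x : A)) =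
          P.π (t α) * (x : A) := by
        rw [← two_smul ℂ, smul_smul]
        norm_num
      rw [hyy] at hfin
      exact hfin.congr fun β => (hval α β).symm
    have hAten : Tendsto (fun i : ιA × ι => (↑(PJ.π (s i) * x) : A)) (lA.curry l)
        (𝓝 (x : A)) :=
      tendsto_curry_of_tendsto (hpi (x : A)) hinner
    rw [tendsto_iff_norm_sub_tendsto_zero]
    have hnorm := tendsto_iff_norm_sub_tendsto_zero.mp hAten
    exact hnorm
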